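/- Let n be a positive integer and g a nonnegative integer with gcd(n,g)=1. Then the spectral norm of the g-circulant matrix C_{n,g}(P) with first row (P_1,P_2,…,P_n) equals (P_{n+1} + P_n − 1)/2. -/

import Mathlib

/-- The `g`-circulant matrix of size `n` with first row `(a 0, a 1, …, a (n-1))`:
its `(i,j)` entry (0-indexed) equals `a ((j - i*g) mod n)`. -/
def gCirc {α : Type*} (n g : ℕ) (a : ℕ → α) : Matrix (Fin n) (Fin n) α :=
  Matrix.of fun i j => a ((j.val + (n - (i.val * g) % n)) % n)

/-- The spectral norm (operator 2-norm) of a real square matrix. -/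
noncomputable def matrixSpectralNorm {n : ℕ} (A : Matrix (Fin n) (Fin n) ℝ) : ℝ :=
  ‖Matrix.toEuclideanCLM (𝕜 := ℝ) A‖

/-- Norm of a matrix with nonnegative entries and all row and column sums equal to `s`. -/
lemma norm_toEuclideanCLM_of_row_col_sums (n : ℕ) (hn : 0 < n)
    (B : Matrix (Fin n) (Fin n) ℝ) (s : ℝ)
    (hpos : ∀ i j, 0 ≤ B i j)
    (hrow : ∀ i, ∑ j, B i j = s)
    (hcol : ∀ j, ∑ i, B i j = s) :
    ‖Matrix.toEuclideanCLM (𝕜 := ℝ) B‖ = s := by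
  have i0 : Fin n := ⟨0, hn⟩
  have hs : 0 ≤ s := (hrow i0) ▸ Finset.sum_nonneg fun j _ => hpos i0 j
  apply le_antisymm
  · apply ContinuousLinearMap.opNorm_le_bound _ hs
    intro x
    set y : Fin n → ℝ := WithLp.equiv 2 _ x with hy
    have hx : Matrix.toEuclideanCLM (𝕜 := ℝ) B x
        = (WithLp.equiv 2 _).symm (Matrix.toLin' B y) := by
      rw [← (show ∀ (A : Matrix (Fin n) (Fin n) ℝ) (v : Fin n → ℝ), Matrix.toEuclideanCLM (𝕜 := ℝ) A ((WithLp.equiv 2 _).symm v) = (WithLp.equiv 2 _).symm (Matrix.toLin' A v) from fun _ _ => rfl)]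
      simp [hy]
    have key : ∑ i, (∑ j, B i j * y j) ^ 2 ≤ s ^ 2 * ∑ j, (y j) ^ 2 := by
      have h1 : ∀ i, (∑ j, B i j * y j) ^ 2 ≤ s * ∑ j, B i j * (y j) ^ 2 := by
        intro i
        have := Finset.sum_mul_sq_le_sq_mul_sq Finset.univ
          (fun j => Real.sqrt (B i j)) (fun j => Real.sqrt (B i j) * y j)
        have e1 : ∀ j, Real.sqrt (B i j) * (Real.sqrt (B i j) * y j) = B i j * y j := by
          intro j
          rw [← mul_assoc, Real.mul_self_sqrt (hpos i j)]
        have e2 : ∀ j, Real.sqrt (B i j) ^ 2 = B i j := fun j => Real.sq_sqrt (hpos i j)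
        have e3 : ∀ j, (Real.sqrt (B i j) * y j) ^ 2 = B i j * (y j) ^ 2 := by
          intro j
          rw [mul_pow, e2]
        calc (∑ j, B i j * y j) ^ 2
            = (∑ j, Real.sqrt (B i j) * (Real.sqrt (B i j) * y j)) ^ 2 := by
              simp_rw [e1]
          _ ≤ (∑ j, Real.sqrt (B i j) ^ 2) * ∑ j, (Real.sqrt (B i j) * y j) ^ 2 := this
          _ = s * ∑ j, B i j * (y j) ^ 2 := by
              simp_rw [e2, e3, hrow i]
      calc ∑ i, (∑ j, B i j * y j) ^ 2
          ≤ ∑ i, s * ∑ j, B i j * (y j) ^ 2 :=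
            Finset.sum_le_sum fun i _ => h1 i
        _ = s * ∑ j, (∑ i, B i j) * (y j) ^ 2 := by
            rw [← Finset.mul_sum, Finset.sum_comm]
            congr 1
            refine Finset.sum_congr rfl fun j _ => ?_
            rw [Finset.sum_mul]
        _ = s ^ 2 * ∑ j, (y j) ^ 2 := by
            simp_rw [hcol]
            rw [← Finset.mul_sum, ← mul_assoc, sq]
    have hnx : ‖x‖ = Real.sqrt (∑ j, (y j) ^ 2) := by
      rw [EuclideanSpace.norm_eq]
      congr 1
      refine Finset.sum_congr rfl fun j _ => ?_
      rw [Real.norm_eq_abs, sq_abs]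
      rfl
    have hnAx : ‖Matrix.toEuclideanCLM (𝕜 := ℝ) B x‖
        = Real.sqrt (∑ i, (∑ j, B i j * y j) ^ 2) := by
      rw [hx, EuclideanSpace.norm_eq]
      congr 1
      refine Finset.sum_congr rfl fun i _ => ?_
      rw [Real.norm_eq_abs, sq_abs]
      simp [Matrix.toLin'_apply, Matrix.mulVec, dotProduct]
    rw [hnAx, hnx]
    calc Real.sqrt (∑ i, (∑ j, B i j * y j) ^ 2)
        ≤ Real.sqrt (s ^ 2 * ∑ j, (y j) ^ 2) := Real.sqrt_le_sqrt key
      _ = s * Real.sqrt (∑ j, (y j) ^ 2) := by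
          rw [Real.sqrt_mul (sq_nonneg s), Real.sqrt_sq hs]
  · set x : EuclideanSpace ℝ (Fin n) := (WithLp.equiv 2 _).symm (fun _ => (1 : ℝ)) with hxdef
    have hAx : Matrix.toEuclideanCLM (𝕜 := ℝ) B x = s • x := by
      have h1 : Matrix.toLin' B (fun _ => (1 : ℝ)) = fun _ => s := by
        funext i
        simp [Matrix.toLin'_apply, Matrix.mulVec, dotProduct, hrow i]
      rw [hxdef, (show ∀ (A : Matrix (Fin n) (Fin n) ℝ) (v : Fin n → ℝ), Matrix.toEuclideanCLM (𝕜 := ℝ) A ((WithLp.equiv 2 _).symm v) = (WithLp.equiv 2 _).symm (Matrix.toLin' A v) from fun _ _ => rfl), h1]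
      ext i
      simp
    have hxne : x ≠ 0 := by
      intro h
      have : x i0 = (1 : ℝ) := rfl
      rw [h] at this
      simpa using this.symm
    have hxpos : 0 < ‖x‖ := norm_pos_iff.mpr hxne
    have := (Matrix.toEuclideanCLM (𝕜 := ℝ) B).le_opNorm x
    rw [hAx, norm_smul, Real.norm_eq_abs, abs_of_nonneg hs] at this
    exact le_of_mul_le_mul_right this hxpos

/-- Spectral norm of the g-circulant matrix of Pell numbers. -/
theorem spectralNorm_gCirc_pell
    (P : ℕ → ℝ) (hP0 : P 0 = 0) (hP1 : P 1 = 1)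
    (hrec : ∀ m : ℕ, P (m + 2) = 2 * P (m + 1) + P m)
    (n r : ℕ) (hn : 0 < n) (hgcd : Nat.gcd n r = 1) :
    matrixSpectralNorm (gCirc n r (fun m => P (m + 1))) = (P (n + 1) + P n - 1) / 2 := by
  haveI : NeZero n := ⟨hn.ne'⟩
  -- nonnegativity of Pell numbers
  have hPnn : ∀ m, 0 ≤ P m ∧ 0 ≤ P (m + 1) := by
    intro m
    induction m with
    | zero => constructor <;> simp [hP0, hP1]
    | succ k ih =>
      refine ⟨ih.2, ?_⟩
      rw [hrec]
      nlinarith [ih.1, ih.2]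
  -- closed form for the partial sums
  have hsum : ∀ N : ℕ, ∑ m ∈ Finset.range N, P (m + 1) = (P (N + 1) + P N - 1) / 2 := by
    intro N
    induction N with
    | zero => simp [hP0, hP1]
    | succ k ih =>
      rw [Finset.sum_range_succ, ih, hrec k]
      ring
  set s : ℝ := ∑ m ∈ Finset.range n, P (m + 1) with hs
  set a : Fin n → ℝ := fun k => P (k.val + 1) with ha
  have hsuma : ∑ k : Fin n, a k = s := by
    rw [hs, ha]
    exact Fin.sum_univ_eq_sum_range (fun m => P (m + 1)) n
  -- the multiplier in Fin n
  set gb : Fin n := ⟨r % n, Nat.mod_lt _ hn⟩ with hgb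
  -- entry description via Fin subtraction
  have hentry : ∀ i j : Fin n, gCirc n r (fun m => P (m + 1)) i j = a (j - i * gb) := by
    intro i j
    have hval : ((j : Fin n) - i * gb).val = (j.val + (n - (i.val * r) % n)) % n := by
      rw [Fin.sub_def]
      simp only [Fin.mul_def, hgb]
      rw [Nat.add_comm]
      congr 2
      rw [Nat.mul_mod, Nat.mod_mod_of_dvd _ dvd_rfl, ← Nat.mul_mod]
    simp only [gCirc, Matrix.of_apply, ha, hval]
  -- injectivity of multiplication by gb
  have hinj : Function.Injective (fun i : Fin n => i * gb) := by
    intro i i' h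
    have hv : (i.val * r) % n = (i'.val * r) % n := by
      have := congrArg Fin.val h
      simp only [Fin.mul_def, hgb] at this
      rwa [Nat.mul_mod, Nat.mod_mod_of_dvd _ dvd_rfl, ← Nat.mul_mod,
        Nat.mul_mod i'.val, Nat.mod_mod_of_dvd _ dvd_rfl, ← Nat.mul_mod] at this
    have hmod : i.val ≡ i'.val [MOD n] :=
      Nat.ModEq.cancel_right_of_coprime hgcd hv
    have : i.val % n = i'.val % n := hmod
    rw [Nat.mod_eq_of_lt i.isLt, Nat.mod_eq_of_lt i'.isLt] at this
    exact Fin.ext this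
  -- row sums
  have hrow : ∀ i, ∑ j, gCirc n r (fun m => P (m + 1)) i j = s := by
    intro i
    simp_rw [hentry i]
    rw [← hsuma]
    exact Fintype.sum_equiv (Equiv.subRight (i * gb)) _ a fun j => rfl
  -- column sums
  have hcol : ∀ j, ∑ i, gCirc n r (fun m => P (m + 1)) i j = s := by
    intro j
    simp_rw [fun i => hentry i j]
    rw [← hsuma]
    have hbij : Function.Bijective (fun i : Fin n => j - i * gb) := by
      have : Function.Injective (fun i : Fin n => j - i * gb) := by
        intro i i' h
        exact hinj (sub_right_injective h)
      exact (Finite.injective_iff_bijective).mp this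
    exact Fintype.sum_bijective _ hbij _ a fun i => rfl
  have hpos : ∀ i j, 0 ≤ gCirc n r (fun m => P (m + 1)) i j := by
    intro i j
    rw [hentry i j]
    exact (hPnn _).2
  have := norm_toEuclideanCLM_of_row_col_sums n hn _ s hpos hrow hcol
  rw [matrixSpectralNorm, this, hs, hsum n]
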